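/- With notation as in the context, fix i, j ∈ I and set S_j := H_j^{(m_j+2)} − (1/2)(H_j^{(m_j+1)})² in Y_μ. Write ad_x(a) = xa − ax. Then: (a) (ad_{E_i^{(1)}})²(H_j^{(m_j+1)}) = 0; (b) [E_i^{(1)}, E_i^{(2)}] = −d_i·(E_i^{(1)})²; and (c) (ad_{E_i^{(1)}})³(S_j) = 0. -/
import Mathlib


/-! The shifted Yangian `Y_μ`, presented by generators and relations as in the paper:
generators `E_i^{(q)}, F_i^{(q)}` for `i ∈ I`, `q ≥ 1` and `H_i^{(p)}` for `p ∈ ℤ`,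
with the relations of Definitions 3.1 and 3.2 of the paper, where `m i = −⟨μ, α_i⟩`. -/

open scoped Classical
namespace ShiftedYangian

/-- Generators of the shifted Yangian: `E i q` and `F i q` for `q ≥ 1`, `H i p` for `p : ℤ`. -/
inductive YGen (I : Type) : Type
  | E : I → ℕ+ → YGen I
  | F : I → ℕ+ → YGen I
  | H : I → ℤ → YGen I

/-- The commutator `[x, y] = x y − y x`. -/
def brkt {A : Type*} [Ring A] (x y : A) : A := x * y - y * x

/-- The iterated bracket `nestBrkt y [x₁, …, x_N] = [x₁, [x₂, ⋯ [x_N, y] ⋯]]`. -/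
def nestBrkt {A : Type*} [Ring A] (y : A) : List A → A
  | [] => y
  | x :: xs => brkt x (nestBrkt y xs)

variable (I : Type) (a : I → I → ℤ) (d : I → ℤ) (m : I → ℤ)

/-- The generator `E_i^{(q)}` of the free algebra. -/
noncomputable def eg (i : I) (q : ℕ+) : FreeAlgebra ℂ (YGen I) := FreeAlgebra.ι ℂ (YGen.E i q)

/-- The generator `F_i^{(q)}` of the free algebra. -/
noncomputable def fg (i : I) (q : ℕ+) : FreeAlgebra ℂ (YGen I) := FreeAlgebra.ι ℂ (YGen.F i q)

/-- The generator `H_i^{(p)}` of the free algebra. -/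
noncomputable def hg (i : I) (p : ℤ) : FreeAlgebra ℂ (YGen I) := FreeAlgebra.ι ℂ (YGen.H i p)

/-- The defining relations of the shifted Yangian `Y_μ`, with `α_i·α_j = d_i a_{ij}` and
`m i = −⟨μ, α_i⟩`. -/
inductive Rel : FreeAlgebra ℂ (YGen I) → FreeAlgebra ℂ (YGen I) → Prop
  | HH : ∀ (i j : I) (p q : ℤ), Rel (brkt (hg I i p) (hg I j q)) 0
  | EF : ∀ (i j : I) (p q : ℕ+),
      Rel (brkt (eg I i p) (fg I j q))
          (if i = j then hg I i ((p : ℤ) + (q : ℤ) - 1) else 0)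
  | HE : ∀ (i j : I) (p : ℤ) (q : ℕ+),
      Rel (brkt (hg I i (p + 1)) (eg I j q) - brkt (hg I i p) (eg I j (q + 1)))
          ((((d i * a i j : ℤ) : ℂ) / 2) • (hg I i p * eg I j q + eg I j q * hg I i p))
  | HF : ∀ (i j : I) (p : ℤ) (q : ℕ+),
      Rel (brkt (hg I i (p + 1)) (fg I j q) - brkt (hg I i p) (fg I j (q + 1)))
          (-((((d i * a i j : ℤ) : ℂ) / 2) • (hg I i p * fg I j q + fg I j q * hg I i p)))
  | EE : ∀ (i j : I) (p q : ℕ+),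
      Rel (brkt (eg I i (p + 1)) (eg I j q) - brkt (eg I i p) (eg I j (q + 1)))
          ((((d i * a i j : ℤ) : ℂ) / 2) • (eg I i p * eg I j q + eg I j q * eg I i p))
  | FF : ∀ (i j : I) (p q : ℕ+),
      Rel (brkt (fg I i (p + 1)) (fg I j q) - brkt (fg I i p) (fg I j (q + 1)))
          (-((((d i * a i j : ℤ) : ℂ) / 2) • (fg I i p * fg I j q + fg I j p * fg I i q)))
  | serreE : ∀ (i j : I), i ≠ j → ∀ (q : ℕ+) (p : Fin (1 - a i j).toNat → ℕ+),
      Rel (∑ σ : Equiv.Perm (Fin (1 - a i j).toNat),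
            nestBrkt (eg I j q) (List.ofFn fun k => eg I i (p (σ k)))) 0
  | serreF : ∀ (i j : I), i ≠ j → ∀ (q : ℕ+) (p : Fin (1 - a i j).toNat → ℕ+),
      Rel (∑ σ : Equiv.Perm (Fin (1 - a i j).toNat),
            nestBrkt (fg I j q) (List.ofFn fun k => fg I i (p (σ k)))) 0
  | Hlow : ∀ (i : I) (p : ℤ), p < m i → Rel (hg I i p) 0
  | Hone : ∀ (i : I), Rel (hg I i (m i)) 1

/-- The shifted Yangian `Y_μ`. -/
abbrev Y := RingQuot (Rel I a d m)

/-- The generator `E_i^{(q)}` of `Y_μ`. -/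
noncomputable def E (i : I) (q : ℕ+) : Y I a d m :=
  RingQuot.mkAlgHom ℂ (Rel I a d m) (eg I i q)

/-- The generator `F_i^{(q)}` of `Y_μ`. -/
noncomputable def F (i : I) (q : ℕ+) : Y I a d m :=
  RingQuot.mkAlgHom ℂ (Rel I a d m) (fg I i q)

/-- The generator `H_i^{(p)}` of `Y_μ`. -/
noncomputable def H (i : I) (p : ℤ) : Y I a d m :=
  RingQuot.mkAlgHom ℂ (Rel I a d m) (hg I i p)

end ShiftedYangian

section BrktAux
open ShiftedYangian

lemma brkt_skew {A : Type*} [Ring A] (x y : A) : brkt x y = -brkt y x := by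
  simp only [brkt, neg_sub]

lemma brkt_one_left {A : Type*} [Ring A] (x : A) : brkt 1 x = 0 := by
  simp [brkt]

lemma map_brkt {R A B : Type*} [CommSemiring R] [Ring A] [Ring B] [Algebra R A]
    [Algebra R B] (f : A →ₐ[R] B) (x y : A) : f (brkt x y) = brkt (f x) (f y) := by
  simp [brkt]

variable {A : Type*} [Ring A] [Algebra ℂ A]

lemma aux_a (c : ℂ) (x : A) : x * -(c • x) - -(c • x) * x = 0 := by
  rw [mul_neg, neg_mul, mul_smul_comm, smul_mul_assoc]
  abel

lemma aux_b (r : ℂ) (B y : A) (h : -B - B = (r * 2 / 2) • (y * y + y * y)) :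
    B = -(r • y ^ 2) := by
  rw [sq]
  have h2 : (-2 : ℂ) • B = (-2 : ℂ) • (-(r • (y * y))) := by
    calc (-2 : ℂ) • B = -B - B := by module
      _ = (r * 2 / 2) • (y * y + y * y) := h
      _ = (-2 : ℂ) • (-(r • (y * y))) := by match_scalars; ring
  calc B = (-2 : ℂ)⁻¹ • ((-2 : ℂ) • B) := by rw [smul_smul]; norm_num
    _ = (-2 : ℂ)⁻¹ • ((-2 : ℂ) • (-(r • (y * y)))) := by rw [h2]
    _ = -(r • (y * y)) := by rw [smul_smul]; norm_num

lemma aux_cast (n : ℤ) (x y : A) (h : x = -(((n : ℤ) : ℂ) • y)) : x = -(n • y) := by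
  rw [Int.cast_smul_eq_zsmul] at h
  exact h

lemma aux_key1 (c : ℂ) (e x2 k1 k2 : A)
    (hb2 : e * k2 - k2 * e = -(c • x2 + (c / 2) • (k1 * e + e * k1)))
    (had : e * k1 - k1 * e = -(c • e)) :
    e * (k2 - (2⁻¹ : ℂ) • k1 ^ 2) - (k2 - (2⁻¹ : ℂ) • k1 ^ 2) * e = -(c • x2) := by
  have expand : e * (k2 - (2⁻¹ : ℂ) • k1 ^ 2) - (k2 - (2⁻¹ : ℂ) • k1 ^ 2) * e
      = (e * k2 - k2 * e)
        - (2⁻¹ : ℂ) • (k1 * (e * k1 - k1 * e) + (e * k1 - k1 * e) * k1) := by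
    simp only [sq, mul_sub, sub_mul, mul_add, add_mul, smul_sub, smul_add,
      mul_smul_comm, smul_mul_assoc, mul_assoc]
    abel
  rw [expand, had, hb2]
  simp only [mul_neg, neg_mul, mul_smul_comm, smul_mul_assoc, smul_neg, smul_add, smul_smul]
  match_scalars <;> ring

lemma aux_key2 (c r : ℂ) (e x2 : A) (hbr : e * x2 - x2 * e = -(r • e ^ 2)) :
    e * -(c • x2) - -(c • x2) * e = (c * r) • e ^ 2 := by
  have h1 : e * -(c • x2) - -(c • x2) * e = -(c • (e * x2 - x2 * e)) := by
    rw [mul_neg, neg_mul, mul_smul_comm, smul_mul_assoc, smul_sub]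
    abel
  rw [h1, hbr, smul_neg, neg_neg, smul_smul]

lemma aux_key3 (r : ℂ) (e : A) : e * (r • e ^ 2) - (r • e ^ 2) * e = 0 := by
  rw [mul_smul_comm, smul_mul_assoc, ← smul_sub, sq,
    show e * (e * e) - e * e * e = 0 by noncomm_ring, smul_zero]

end BrktAux

open ShiftedYangian in
/-- The nilpotency computations from the proof of Theorem 6.4 ('OreYmu') of the paper, with
`S_j = H_j^{(m_j+2)} − ½ (H_j^{(m_j+1)})²` and `ad_x(a) = xa − ax`:
(a) `(ad_{E_i^{(1)}})² (H_j^{(m_j+1)}) = 0`; (b) `[E_i^{(1)}, E_i^{(2)}] = −d_i (E_i^{(1)})²`;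
(c) `(ad_{E_i^{(1)}})³ (S_j) = 0`. -/
theorem ad_E_one_nilpotency_computations
    (I : Type) [Fintype I] (a : I → I → ℤ) (d : I → ℤ) (m : I → ℤ)
    (ha2 : ∀ i, a i i = 2) (haneg : ∀ i j, i ≠ j → a i j ≤ 0)
    (hd : ∀ i, 0 < d i) (hsym : ∀ i j, d i * a i j = d j * a j i)
    (i j : I) :
    ((fun x => E I a d m i 1 * x - x * E I a d m i 1)^[2] (H I a d m j (m j + 1)) = 0) ∧
    (brkt (E I a d m i 1) (E I a d m i 2) = -(d i • (E I a d m i 1) ^ 2)) ∧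
    ((fun x => E I a d m i 1 * x - x * E I a d m i 1)^[3]
        (H I a d m j (m j + 2) - (2⁻¹ : ℂ) • (H I a d m j (m j + 1)) ^ 2) = 0) := by
  classical
  have φrel : ∀ {x y : FreeAlgebra ℂ (YGen I)}, Rel I a d m x y →
      RingQuot.mkAlgHom ℂ (Rel I a d m) x = RingQuot.mkAlgHom ℂ (Rel I a d m) y :=
    fun h => RingQuot.mkAlgHom_rel ℂ h
  have hHdef : ∀ (k : I) (p : ℤ),
      RingQuot.mkAlgHom ℂ (Rel I a d m) (hg I k p) = H I a d m k p := fun _ _ => rfl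
  have hEdef : ∀ (k : I) (q : ℕ+),
      RingQuot.mkAlgHom ℂ (Rel I a d m) (eg I k q) = E I a d m k q := fun _ _ => rfl
  set e1 := E I a d m i 1 with he1
  set e2 := E I a d m i 2 with he2
  set h1 := H I a d m j (m j + 1) with hh1
  set h2 := H I a d m j (m j + 2) with hh2
  set c : ℂ := ((d j * a j i : ℤ) : ℂ) with hc
  have hpp : (1 : ℕ+) + 1 = 2 := rfl
  -- H_j^{(m_j)} = 1
  have hone : H I a d m j (m j) = 1 := by
    have h0 := φrel (Rel.Hone j)
    rw [map_one, hHdef] at h0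
    exact h0
  -- [H_j^{(m_j+1)}, E_i^{(q)}] = c • E_i^{(q)}
  have hHE : ∀ q : ℕ+, brkt h1 (E I a d m i q) = c • E I a d m i q := by
    intro q
    have h0 := φrel (Rel.HE j i (m j) q)
    simp only [map_sub, map_brkt, map_smul, map_mul, map_add, hHdef, hEdef] at h0
    rw [hone, brkt_one_left, sub_zero] at h0
    rw [← hc, ← hh1] at h0
    simp only [hone, one_mul, mul_one] at h0
    rw [h0, smul_add, ← add_smul]
    congr 1
    ring
  have hHE1 : brkt h1 e1 = c • e1 := by simpa [← he1] using hHE 1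
  have hHE2 : brkt h1 e2 = c • e2 := by simpa [← he2] using hHE 2
  -- [H_j^{(m_j+2)}, E_i^{(1)}] = c • E_i^{(2)} + (c/2) • (h1 e1 + e1 h1)
  have hH2E : brkt h2 e1 = c • e2 + (c / 2) • (h1 * e1 + e1 * h1) := by
    have h0 := φrel (Rel.HE j i (m j + 1) 1)
    simp only [map_sub, map_brkt, map_smul, map_mul, map_add, hHdef, hEdef] at h0
    rw [hpp] at h0
    have hmm : m j + 1 + 1 = m j + 2 := by ring
    rw [hmm, ← hh2, ← hh1, ← he1, ← he2, hHE2, sub_eq_iff_eq_add] at h0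
    rw [h0, add_comm]
  -- e1 h1 - h1 e1 = -(c • e1)
  have had : e1 * h1 - h1 * e1 = -(c • e1) := by
    rw [brkt] at hHE1
    rw [← hHE1]
    abel
  -- part (b): [E_i^{(1)}, E_i^{(2)}] = -(d i • e1^2)
  have hEEc : brkt e1 e2 = -(((d i : ℤ) : ℂ) • e1 ^ 2) := by
    have h0 := φrel (Rel.EE i i 1 1)
    simp only [map_sub, map_brkt, map_smul, map_mul, map_add, hEdef] at h0
    rw [hpp, ← he1, ← he2, ha2, brkt_skew e2 e1] at h0
    push_cast at h0
    exact aux_b _ _ _ h0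
  have hEE : brkt e1 e2 = -(d i • e1 ^ 2) := aux_cast _ _ _ hEEc
  refine ⟨?_, ?_, ?_⟩
  · -- part (a)
    simp only [Function.iterate_succ, Function.iterate_zero, Function.comp_apply, id_eq]
    rw [had]
    exact aux_a c e1
  · exact hEE
  · -- part (c)
    have hb2 : e1 * h2 - h2 * e1 = -(c • e2 + (c / 2) • (h1 * e1 + e1 * h1)) := by
      have := hH2E
      rw [brkt] at this
      rw [← this]
      abel
    have key1 : e1 * (h2 - (2⁻¹ : ℂ) • h1 ^ 2) - (h2 - (2⁻¹ : ℂ) • h1 ^ 2) * e1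
        = -(c • e2) := aux_key1 c e1 e2 h1 h2 hb2 had
    have key2 : e1 * -(c • e2) - -(c • e2) * e1 = (c * ((d i : ℤ) : ℂ)) • e1 ^ 2 :=
      aux_key2 c _ e1 e2 hEEc
    have key3 : e1 * ((c * ((d i : ℤ) : ℂ)) • e1 ^ 2)
        - ((c * ((d i : ℤ) : ℂ)) • e1 ^ 2) * e1 = 0 :=
      aux_key3 _ e1
    simp only [Function.iterate_succ, Function.iterate_zero, Function.comp_apply, id_eq]
    rw [key1, key2, key3]
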